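/- Let n ≥ 3. Define Dₙ as the set of d > 0 such that for all x, y ∈ ℝⁿ with |x−y| = d, there exists a finite set S ⊆ ℝⁿ containing x and y such that every map f: S → ℂⁿ preserving unit distance (i.e., φₙ(f(a),f(b)) = 1 whenever |a−b| = 1) satisfies φₙ(f(x),f(y)) = d². If d ∈ Dₙ, then √(2+2/n)·d ∈ Dₙ. -/

import Mathlib

noncomputable def phi (n : ℕ) (x y : Fin n → ℂ) : ℂ := ∑ i, (x i - y i) ^ 2


open Matrix

lemma phi_eq {n : ℕ} (x y : Fin n → ℂ) : phi n x y = (x - y) ⬝ᵥ (x - y) := by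
  simp [phi, dotProduct, sq]

lemma phi_comm {n : ℕ} (x y : Fin n → ℂ) : phi n x y = phi n y x := by
  simp only [phi]; congr 1; ext i; ring

lemma phi_self {n : ℕ} (x : Fin n → ℂ) : phi n x x = 0 := by simp [phi]

lemma dot_sub_sub {n : ℕ} (u v : Fin n → ℂ) :
    (u - v) ⬝ᵥ (u - v) = u ⬝ᵥ u - 2 * (u ⬝ᵥ v) + v ⬝ᵥ v := by
  rw [sub_dotProduct, dotProduct_sub, dotProduct_sub, dotProduct_comm v u]; ring

lemma dotProduct_sumv {n m : ℕ} (v : Fin n → ℂ) (f : Fin m → Fin n → ℂ) :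
    v ⬝ᵥ (∑ j, f j) = ∑ j, v ⬝ᵥ f j := by
  simp only [dotProduct, Finset.sum_apply, Finset.mul_sum]
  exact Finset.sum_comm

lemma sumv_dotProduct {n m : ℕ} (v : Fin n → ℂ) (f : Fin m → Fin n → ℂ) :
    (∑ j, f j) ⬝ᵥ v = ∑ j, f j ⬝ᵥ v := by
  simp only [dotProduct, Finset.sum_apply, Finset.sum_mul]
  exact Finset.sum_comm

lemma key {n : ℕ} (hn : 0 < n) (s : ℂ) (hs : s ≠ 0)
    (a b : Fin n → ℂ) (p : Fin n → Fin n → ℂ)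
    (hap : ∀ i, phi n a (p i) = s) (hbp : ∀ i, phi n b (p i) = s)
    (hpp : ∀ i j, i ≠ j → phi n (p i) (p j) = s) :
    phi n a b = (2 + 2 / (n : ℂ)) * s ∨ a = b := by
  have hn0 : (n : ℂ) ≠ 0 := Nat.cast_ne_zero.mpr hn.ne'
  have hn1 : (n : ℂ) + 1 ≠ 0 := by
    have : ((n + 1 : ℕ) : ℂ) ≠ 0 := Nat.cast_ne_zero.mpr (Nat.succ_ne_zero n)
    simpa using this
  set r : Fin n → Fin n → ℂ := fun i => p i - a with hr
  set w : Fin n → ℂ := b - a with hwdef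
  have h1 : ∀ i, r i ⬝ᵥ r i = s := by
    intro i
    have h := hap i
    rw [phi_eq] at h
    have h' : a - p i = -(r i) := (neg_sub _ _).symm
    rw [h', neg_dotProduct, dotProduct_neg, neg_neg] at h
    exact h
  have h2 : ∀ i j, i ≠ j → r i ⬝ᵥ r j = s / 2 := by
    intro i j hij
    have h := hpp i j hij
    rw [phi_eq] at h
    have h' : p i - p j = r i - r j := by simp only [hr]; abel
    rw [h', dot_sub_sub, h1 i, h1 j] at h
    linear_combination -h / 2
  set β : ℂ := phi n a b with hβ
  have hww : w ⬝ᵥ w = β := by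
    rw [hβ, phi_eq]
    have h' : a - b = -w := by rw [hwdef, neg_sub]
    rw [h', neg_dotProduct, dotProduct_neg, neg_neg]
  have h3 : ∀ i, w ⬝ᵥ r i = β / 2 := by
    intro i
    have h := hbp i
    rw [phi_eq] at h
    have h' : b - p i = w - r i := by simp only [hr, hwdef]; abel
    rw [h', dot_sub_sub, hww, h1 i] at h
    linear_combination -h / 2
  -- the matrix with rows `r i` is invertible
  set M : Matrix (Fin n) (Fin n) ℂ := Matrix.of r with hM
  set J : Matrix (Fin n) (Fin n) ℂ := Matrix.of (fun _ _ => (1 : ℂ)) with hJ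
  have hJJ : J * J = (n : ℂ) • J := by
    ext i j; simp [hJ, Matrix.mul_apply, Matrix.smul_apply]
  have hG : M * Mᵀ = (s / 2) • (1 + J) := by
    ext i j
    have hij' : (M * Mᵀ) i j = r i ⬝ᵥ r j := by
      simp [hM, Matrix.mul_apply, dotProduct]
    rw [hij']
    rcases eq_or_ne i j with rfl | hij
    · rw [h1 i]; simp [hJ]; ring
    · rw [h2 i j hij]; simp [hJ, Matrix.one_apply_ne hij]
  set c : ℂ := ((n : ℂ) + 1)⁻¹ with hc
  have hcoef : (1 : ℂ) - c - c * n = 0 := by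
    rw [hc]; field_simp; ring
  have hGH : (M * Mᵀ) * ((2 / s) • (1 - c • J)) = 1 := by
    rw [hG, Matrix.smul_mul, Matrix.mul_smul, smul_smul]
    have hc' : s / 2 * (2 / s) = 1 := by field_simp
    rw [hc', one_smul]
    have e2 : J * (c • J) = (c * (n : ℂ)) • J := by
      rw [Matrix.mul_smul, hJJ, smul_smul]
    have e1 : (1 + J) * (1 - c • J)
        = (1 : Matrix (Fin n) (Fin n) ℂ) - c • J + (J - J * (c • J)) := by
      rw [add_mul, one_mul, mul_sub, mul_one]
    have e3 : (1 : Matrix (Fin n) (Fin n) ℂ) - c • J + (J - (c * (n : ℂ)) • J)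
        = 1 + ((1 : ℂ) - c - c * n) • J := by
      module
    rw [e1, e2, e3, hcoef, zero_smul, add_zero]
  have hMinj : ∀ z : Fin n → ℂ, M.mulVec z = 0 → z = 0 := by
    intro z hz
    set N : Matrix (Fin n) (Fin n) ℂ := Mᵀ * ((2 / s) • (1 - c • J)) with hN
    have hMN : M * N = 1 := by rw [hN, ← Matrix.mul_assoc]; exact hGH
    have hNM : N * M = 1 := mul_eq_one_comm.mp hMN
    calc z = (N * M).mulVec z := by rw [hNM, Matrix.one_mulVec]
    _ = N.mulVec (M.mulVec z) := by rw [← Matrix.mulVec_mulVec]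
    _ = 0 := by rw [hz, Matrix.mulVec_zero]
  set σ : Fin n → ℂ := ∑ i, r i with hσ
  have hrσ : ∀ i, r i ⬝ᵥ σ = ((n : ℂ) + 1) * s / 2 := by
    intro i
    rw [hσ, dotProduct_sumv]
    rw [← Finset.sum_erase_add _ _ (Finset.mem_univ i), h1 i]
    have he : ∑ j ∈ Finset.univ.erase i, r i ⬝ᵥ r j
        = ∑ j ∈ Finset.univ.erase i, s / 2 := by
      refine Finset.sum_congr rfl fun j hj => ?_
      exact h2 i j (Finset.ne_of_mem_erase hj).symm
    rw [he, Finset.sum_const, Finset.card_erase_of_mem (Finset.mem_univ i),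
      Finset.card_univ, Fintype.card_fin]
    have hcast : ((n - 1 : ℕ) : ℂ) = (n : ℂ) - 1 := by
      rw [Nat.cast_sub hn]; simp
    rw [nsmul_eq_mul, hcast]; ring
  set t : ℂ := β / (((n : ℂ) + 1) * s) with ht
  have hwt : w = t • σ := by
    have hz : M.mulVec (w - t • σ) = 0 := by
      funext i
      have h6 : M.mulVec (w - t • σ) i = r i ⬝ᵥ (w - t • σ) := rfl
      rw [h6, dotProduct_sub, dotProduct_smul, hrσ i, dotProduct_comm, h3 i,
        smul_eq_mul, ht]
      rw [Pi.zero_apply]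
      field_simp
      ring
    exact sub_eq_zero.mp (hMinj _ hz)
  have hσσ : σ ⬝ᵥ σ = (n : ℂ) * ((n : ℂ) + 1) * s / 2 := by
    rw [hσ, sumv_dotProduct]
    have : ∀ i : Fin n, r i ⬝ᵥ (∑ j, r j) = ((n : ℂ) + 1) * s / 2 := by
      intro i; rw [show (∑ j, r j) = σ from rfl]; exact hrσ i
    rw [Finset.sum_congr rfl fun i _ => this i, Finset.sum_const, Finset.card_univ,
      Fintype.card_fin, nsmul_eq_mul]
    ring
  have hfin : β = t * t * ((n : ℂ) * ((n : ℂ) + 1) * s / 2) := by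
    rw [← hww, hwt, smul_dotProduct, dotProduct_smul, hσσ, smul_eq_mul, smul_eq_mul]
    ring
  have hquad : β * (2 * ((n : ℂ) + 1) * s - β * n) = 0 := by
    rw [ht] at hfin
    field_simp at hfin
    have h8 : (β * (2 * ((n : ℂ) + 1) * s - β * n)) * (((n : ℂ) + 1) * s) = 0 := by
      linear_combination (((n : ℂ) + 1) * s) * hfin
    exact (mul_eq_zero.mp h8).resolve_right (mul_ne_zero hn1 hs)
  rcases mul_eq_zero.mp hquad with h0 | h0
  · right
    have ht0 : t = 0 := by rw [ht, h0, zero_div]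
    have : w = 0 := by rw [hwt, ht0, zero_smul]
    have := sub_eq_zero.mp (by rw [← hwdef]; exact this)
    exact this.symm
  · left
    have h7 : β * (n : ℂ) = 2 * ((n : ℂ) + 1) * s := by
      have := sub_eq_zero.mp h0
      linear_combination -this
    have h2n : (2 : ℂ) + 2 / (n : ℂ) = 2 * ((n : ℂ) + 1) / (n : ℂ) := by
      rw [eq_div_iff hn0, add_mul, div_mul_cancel₀ _ hn0]; ring
    rw [hβ] at h7
    rw [h2n, div_mul_eq_mul_div, eq_div_iff hn0]
    linear_combination h7


open Module Submodule

noncomputable def onesE (n : ℕ) : EuclideanSpace ℝ (Fin n) := WithLp.toLp 2 (fun _ => 1)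

lemma onesE_ne_zero {n : ℕ} (hn : 0 < n) : onesE n ≠ 0 := by
  intro h
  have := congrArg (fun v : EuclideanSpace ℝ (Fin n) => v ⟨0, hn⟩) h
  simp [onesE] at this

lemma finrank_orthogonal_singleton {n : ℕ} (u : EuclideanSpace ℝ (Fin n)) (hu : u ≠ 0) :
    finrank ℝ ((ℝ ∙ u)ᗮ : Submodule ℝ (EuclideanSpace ℝ (Fin n))) = n - 1 := by
  have h1 : finrank ℝ (ℝ ∙ u) = 1 := finrank_span_singleton hu
  have h2 := (ℝ ∙ u).finrank_add_finrank_orthogonal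
  rw [h1, finrank_euclideanSpace_fin] at h2
  omega

noncomputable def orthEquiv {n : ℕ} (hn : 0 < n) (u : EuclideanSpace ℝ (Fin n)) (hu : u ≠ 0) :
    ((ℝ ∙ (onesE n))ᗮ : Submodule ℝ (EuclideanSpace ℝ (Fin n))) ≃ₗᵢ[ℝ]
      ((ℝ ∙ u)ᗮ : Submodule ℝ (EuclideanSpace ℝ (Fin n))) :=
  (stdOrthonormalBasis ℝ _).repr.trans
    (((stdOrthonormalBasis ℝ _).reindex (finCongr
      ((finrank_orthogonal_singleton u hu).trans
        (finrank_orthogonal_singleton (onesE n) (onesE_ne_zero hn)).symm))).repr.symm)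

noncomputable def vE (n : ℕ) (i : Fin n) : EuclideanSpace ℝ (Fin n) :=
  EuclideanSpace.single i (1 : ℝ) - (n : ℝ)⁻¹ • onesE n

lemma inner_vE {n : ℕ} (hn : 0 < n) (i j : Fin n) :
    inner ℝ (vE n i) (vE n j) = ((if i = j then (1:ℝ) else 0) - (n : ℝ)⁻¹) := by
  have hn0 : (n : ℝ) ≠ 0 := Nat.cast_ne_zero.mpr hn.ne'
  simp only [vE, PiLp.inner_apply, RCLike.inner_apply, conj_trivial]
  have hexp : ∀ k : Fin n,
      (EuclideanSpace.single i (1:ℝ) - (n : ℝ)⁻¹ • onesE n) k *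
      (EuclideanSpace.single j (1:ℝ) - (n : ℝ)⁻¹ • onesE n) k
      = (EuclideanSpace.single i (1:ℝ) k) * (EuclideanSpace.single j (1:ℝ) k)
        - (n : ℝ)⁻¹ * (EuclideanSpace.single i (1:ℝ) k)
        - (n : ℝ)⁻¹ * (EuclideanSpace.single j (1:ℝ) k) + (n : ℝ)⁻¹ * (n : ℝ)⁻¹ := by
    intro k
    have h1 : (EuclideanSpace.single i (1:ℝ) - (n : ℝ)⁻¹ • onesE n) k
        = EuclideanSpace.single i (1:ℝ) k - (n : ℝ)⁻¹ := by
      simp [onesE]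
    have h2 : (EuclideanSpace.single j (1:ℝ) - (n : ℝ)⁻¹ • onesE n) k
        = EuclideanSpace.single j (1:ℝ) k - (n : ℝ)⁻¹ := by
      simp [onesE]
    rw [h1, h2]; ring
  rw [Finset.sum_congr rfl fun k _ => (mul_comm _ _).trans (hexp k)]
  rw [Finset.sum_add_distrib, Finset.sum_sub_distrib, Finset.sum_sub_distrib]
  have e1 : ∑ k : Fin n, (EuclideanSpace.single i (1:ℝ) k) * (EuclideanSpace.single j (1:ℝ) k)
      = if i = j then (1:ℝ) else 0 := by
    simp only [EuclideanSpace.single_apply]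
    rw [Finset.sum_eq_single i]
    · simp [eq_comm]
    · intro k _ hk; rw [if_neg hk, zero_mul]
    · intro h; exact absurd (Finset.mem_univ i) h
  have e2 : ∑ k : Fin n, (n : ℝ)⁻¹ * (EuclideanSpace.single i (1:ℝ) k) = (n : ℝ)⁻¹ := by
    rw [← Finset.mul_sum]
    simp [EuclideanSpace.single_apply]
  have e3 : ∑ k : Fin n, (n : ℝ)⁻¹ * (EuclideanSpace.single j (1:ℝ) k) = (n : ℝ)⁻¹ := by
    rw [← Finset.mul_sum]
    simp [EuclideanSpace.single_apply]
  have e4 : ∑ _k : Fin n, (n : ℝ)⁻¹ * (n : ℝ)⁻¹ = (n : ℝ)⁻¹ := by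
    rw [Finset.sum_const, Finset.card_univ, Fintype.card_fin, nsmul_eq_mul]
    field_simp
  rw [e1, e2, e3, e4]
  ring

lemma vE_mem {n : ℕ} (hn : 0 < n) (i : Fin n) : vE n i ∈ (ℝ ∙ (onesE n))ᗮ := by
  rw [Submodule.mem_orthogonal_singleton_iff_inner_right]
  have hn0 : (n : ℝ) ≠ 0 := Nat.cast_ne_zero.mpr hn.ne'
  simp only [vE, inner_sub_right, inner_smul_right]
  have h1 : inner ℝ (onesE n) (EuclideanSpace.single i (1:ℝ)) = (1 : ℝ) := by
    simp [PiLp.inner_apply, onesE, EuclideanSpace.single_apply]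
  have h2 : inner ℝ (onesE n) (onesE n) = (n : ℝ) := by
    rw [PiLp.inner_apply]; simp [onesE]
  rw [h1, h2]
  field_simp
  ring

lemma eq_dist_of_sq {n : ℕ} {x y : EuclideanSpace ℝ (Fin n)} {e : ℝ} (he : 0 ≤ e)
    (h : ‖x - y‖ ^ 2 = e ^ 2) : dist x y = e := by
  rw [dist_eq_norm, ← Real.sqrt_sq (norm_nonneg (x - y)), h, Real.sqrt_sq he]

lemma exists_simplex {n : ℕ} (hn : 0 < n) {d D : ℝ} (hd : 0 < d) (hD : 0 < D)
    (hDd : D ^ 2 = (2 + 2 / n) * d ^ 2)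
    (a b : EuclideanSpace ℝ (Fin n)) (hab : dist a b = D) :
    ∃ P : Fin n → EuclideanSpace ℝ (Fin n),
      (∀ i, dist a (P i) = d) ∧ (∀ i, dist b (P i) = d) ∧
      ∀ i j, i ≠ j → dist (P i) (P j) = d := by
  have hn0 : (n : ℝ) ≠ 0 := Nat.cast_ne_zero.mpr hn.ne'
  have hne : a ≠ b := by
    intro h; rw [h, dist_self] at hab; exact hD.ne hab
  set u : EuclideanSpace ℝ (Fin n) := b - a with hu
  have hu0 : u ≠ 0 := sub_ne_zero.mpr (Ne.symm hne)
  have hunorm : ‖u‖ = D := by rw [hu, ← dist_eq_norm, dist_comm]; exact hab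
  set L := orthEquiv hn u hu0 with hL
  set w : Fin n → EuclideanSpace ℝ (Fin n) :=
    fun i => ((L ⟨vE n i, vE_mem hn i⟩ : (ℝ ∙ u)ᗮ) : EuclideanSpace ℝ (Fin n)) with hw
  have hwinner : ∀ i j, (inner ℝ (w i) (w j) : ℝ) = (if i = j then (1:ℝ) else 0) - (n : ℝ)⁻¹ := by
    intro i j
    rw [hw]
    rw [← Submodule.coe_inner, LinearIsometryEquiv.inner_map_map, Submodule.coe_inner]
    exact inner_vE hn i j
  have hwu : ∀ i, (inner ℝ u (w i) : ℝ) = 0 := by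
    intro i
    have := (L ⟨vE n i, vE_mem hn i⟩).2
    rwa [Submodule.mem_orthogonal_singleton_iff_inner_right] at this
  obtain ⟨c, hc2⟩ : ∃ c : ℝ, c ^ 2 = d ^ 2 / 2 :=
    ⟨d / Real.sqrt 2, by rw [div_pow, Real.sq_sqrt (by norm_num : (0:ℝ) ≤ 2)]⟩
  set m : EuclideanSpace ℝ (Fin n) := a + (1/2 : ℝ) • u with hm
  refine ⟨fun i => m + c • w i, ?_, ?_, ?_⟩
  · intro i
    refine eq_dist_of_sq hd.le ?_
    have hsplit : a - (m + c • w i) = (-(1/2) : ℝ) • u + (-c) • w i := by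
      rw [hm]; module
    rw [hsplit, norm_add_sq_real, norm_smul, norm_smul,
      real_inner_smul_left, real_inner_smul_right, hwu i]
    have hwn : ‖w i‖ ^ 2 = 1 - (n:ℝ)⁻¹ := by
      rw [← real_inner_self_eq_norm_sq, hwinner i i, if_pos rfl]
    rw [hunorm, mul_pow, mul_pow, hwn, hDd]
    simp only [Real.norm_eq_abs, sq_abs, neg_sq]
    linear_combination (1 - (n:ℝ)⁻¹) * hc2
  · intro i
    refine eq_dist_of_sq hd.le ?_
    have hsplit : b - (m + c • w i) = ((1/2) : ℝ) • u + (-c) • w i := by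
      rw [hm, hu]; module
    rw [hsplit, norm_add_sq_real, norm_smul, norm_smul,
      real_inner_smul_left, real_inner_smul_right, hwu i]
    have hwn : ‖w i‖ ^ 2 = 1 - (n:ℝ)⁻¹ := by
      rw [← real_inner_self_eq_norm_sq, hwinner i i, if_pos rfl]
    rw [hunorm, mul_pow, mul_pow, hwn, hDd]
    simp only [Real.norm_eq_abs, sq_abs, neg_sq]
    linear_combination (1 - (n:ℝ)⁻¹) * hc2
  · intro i j hij
    refine eq_dist_of_sq hd.le ?_
    have hsplit : (m + c • w i) - (m + c • w j) = c • w i + (-c) • w j := by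
      module
    rw [hsplit, norm_add_sq_real, norm_smul, norm_smul,
      real_inner_smul_left, real_inner_smul_right, hwinner i j, if_neg hij]
    have hwni : ‖w i‖ ^ 2 = 1 - (n:ℝ)⁻¹ := by
      rw [← real_inner_self_eq_norm_sq, hwinner i i, if_pos rfl]
    have hwnj : ‖w j‖ ^ 2 = 1 - (n:ℝ)⁻¹ := by
      rw [← real_inner_self_eq_norm_sq, hwinner j j, if_pos rfl]
    rw [mul_pow, mul_pow, hwni, hwnj]
    simp only [Real.norm_eq_abs, sq_abs, neg_sq]
    linear_combination 2 * hc2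

lemma exists_unit_orth {n : ℕ} (hn : 3 ≤ n) (u : EuclideanSpace ℝ (Fin n)) (hu0 : u ≠ 0) :
    ∃ e : EuclideanSpace ℝ (Fin n), ‖e‖ = 1 ∧ (inner ℝ u e : ℝ) = 0 := by
  have hn' : 0 < n := by omega
  have hnn : (3 : ℝ) ≤ (n : ℝ) := by exact_mod_cast hn
  set L := orthEquiv hn' u hu0 with hL
  set i0 : Fin n := ⟨0, hn'⟩ with hi0
  set w0 : EuclideanSpace ℝ (Fin n) :=
    ((L ⟨vE n i0, vE_mem hn' i0⟩ : (ℝ ∙ u)ᗮ) : EuclideanSpace ℝ (Fin n)) with hw0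
  have hw0norm : ‖w0‖ ^ 2 = 1 - (n:ℝ)⁻¹ := by
    rw [← real_inner_self_eq_norm_sq, hw0, ← Submodule.coe_inner,
      LinearIsometryEquiv.inner_map_map, Submodule.coe_inner, inner_vE hn' i0 i0, if_pos rfl]
  have hw0u : (inner ℝ u w0 : ℝ) = 0 := by
    have := (L ⟨vE n i0, vE_mem hn' i0⟩).2
    rwa [Submodule.mem_orthogonal_singleton_iff_inner_right] at this
  have hw0pos : 0 < ‖w0‖ := by
    have h0 : (1:ℝ) < n := by linarith
    have h1 : (0:ℝ) < 1 - (n:ℝ)⁻¹ := by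
      have := inv_lt_one_of_one_lt₀ h0
      linarith
    nlinarith [norm_nonneg w0]
  refine ⟨‖w0‖⁻¹ • w0, ?_, ?_⟩
  · rw [norm_smul, Real.norm_eq_abs, abs_inv, abs_of_pos hw0pos,
      inv_mul_cancel₀ hw0pos.ne']
  · rw [real_inner_smul_right, hw0u, mul_zero]

lemma exists_third {n : ℕ} (hn : 3 ≤ n) {d D : ℝ} (hd : 0 < d) (hD : 0 < D)
    (hDd : D ^ 2 = (2 + 2 / n) * d ^ 2)
    (a b : EuclideanSpace ℝ (Fin n)) (hab : dist a b = D) :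
    ∃ y' : EuclideanSpace ℝ (Fin n), dist a y' = D ∧ dist b y' = d := by
  have hn' : 0 < n := by omega
  have hn0 : (n : ℝ) ≠ 0 := Nat.cast_ne_zero.mpr hn'.ne'
  have hne : a ≠ b := by intro h; rw [h, dist_self] at hab; exact hD.ne hab
  set u : EuclideanSpace ℝ (Fin n) := b - a with hu
  have hu0 : u ≠ 0 := sub_ne_zero.mpr (Ne.symm hne)
  have hunorm : ‖u‖ = D := by rw [hu, ← dist_eq_norm, dist_comm]; exact hab
  obtain ⟨e, henorm, heu⟩ := exists_unit_orth hn u hu0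
  obtain ⟨α, hα⟩ : ∃ α : ℝ, α = D - d ^ 2 / (2 * D) := ⟨_, rfl⟩
  have hα2 : D ^ 2 - α ^ 2 ≥ 0 := by
    have h1 : 0 < d ^ 2 / (2 * D) := by positivity
    have h2n : (0:ℝ) ≤ 2 / (n:ℝ) := by positivity
    have h2 : d ^ 2 / (2 * D) ≤ D := by
      rw [div_le_iff₀ (by positivity)]
      nlinarith [sq_nonneg d]
    have h3 : 0 ≤ α := by rw [hα]; linarith
    have h4 : α ≤ D := by rw [hα]; linarith
    nlinarith
  obtain ⟨γ, hγ2⟩ : ∃ γ : ℝ, γ ^ 2 = D ^ 2 - α ^ 2 :=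
    ⟨Real.sqrt (D ^ 2 - α ^ 2), Real.sq_sqrt hα2⟩
  refine ⟨a + ((α / D) • u + γ • e), ?_, ?_⟩
  · refine eq_dist_of_sq hD.le ?_
    have hsplit : a - (a + ((α / D) • u + γ • e)) = (-(α / D)) • u + (-γ) • e := by
      module
    rw [hsplit, norm_add_sq_real, norm_smul, norm_smul,
      real_inner_smul_left, real_inner_smul_right, heu, hunorm, henorm]
    simp only [mul_pow, Real.norm_eq_abs, sq_abs, neg_sq]
    have hDD : (α / D) ^ 2 * D ^ 2 = α ^ 2 := by
      field_simp
    linear_combination hDD + hγ2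
  · refine eq_dist_of_sq hd.le ?_
    have hsplit : b - (a + ((α / D) • u + γ • e)) = ((D - α) / D) • u + (-γ) • e := by
      rw [hu]
      have hDne : (D:ℝ) ≠ 0 := hD.ne'
      have hcoef : ((D - α) / D : ℝ) = 1 - α / D := by field_simp
      rw [hcoef]
      module
    rw [hsplit, norm_add_sq_real, norm_smul, norm_smul,
      real_inner_smul_left, real_inner_smul_right, heu, hunorm, henorm]
    simp only [mul_pow, Real.norm_eq_abs, sq_abs, neg_sq]
    have hDD : ((D - α) / D) ^ 2 * D ^ 2 = (D - α) ^ 2 := by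
      field_simp
    have hαd : (D - α) * (2 * D) = d ^ 2 := by
      rw [hα]
      field_simp
      ring
    linear_combination hDD + hγ2 + hαd

/-- `f` preserves unit distance on the set `S`. -/
def UnitPreservingOn (n : ℕ) (S : Set (EuclideanSpace ℝ (Fin n)))
    (f : EuclideanSpace ℝ (Fin n) → (Fin n → ℂ)) : Prop :=
  ∀ a ∈ S, ∀ b ∈ S, dist a b = 1 → phi n (f a) (f b) = 1

/-- `d ∈ Dₙ`: `d > 0` and for all `x y` at distance `d` there is a finite set `S`
containing `x` and `y` such that every unit-distance preserving map `f : S → ℂⁿ`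
satisfies `φₙ(f x, f y) = d²`. -/
def MemD (n : ℕ) (d : ℝ) : Prop :=
  0 < d ∧ ∀ x y : EuclideanSpace ℝ (Fin n), dist x y = d →
    ∃ S : Finset (EuclideanSpace ℝ (Fin n)), x ∈ S ∧ y ∈ S ∧
      ∀ f : EuclideanSpace ℝ (Fin n) → (Fin n → ℂ),
        UnitPreservingOn n (↑S) f → phi n (f x) (f y) = (d : ℂ) ^ 2

theorem stmt16 (n : ℕ) (hn : 3 ≤ n) (d : ℝ) (hd : MemD n d) :
    MemD n (Real.sqrt (2 + 2 / n) * d) := by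
  classical
  obtain ⟨hdpos, hmem⟩ := hd
  have hn' : 0 < n := by omega
  have hnR : (0:ℝ) < n := by exact_mod_cast hn'
  set v : ℝ := 2 + 2 / n with hv
  have hv2 : (0:ℝ) < 2 / n := by positivity
  have hv1 : (1:ℝ) < v := by rw [hv]; linarith
  have hvpos : (0:ℝ) < v := by linarith
  set D : ℝ := Real.sqrt v * d with hDdef
  have hDpos : 0 < D := mul_pos (Real.sqrt_pos.mpr hvpos) hdpos
  have hD2 : D ^ 2 = v * d ^ 2 := by rw [hDdef, mul_pow, Real.sq_sqrt hvpos.le]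
  have hsne : ((d:ℂ))^2 ≠ 0 := pow_ne_zero _ (by exact_mod_cast hdpos.ne')
  have hcastv : ((D : ℝ) : ℂ) ^ 2 = (2 + 2/(n:ℂ)) * (d:ℂ)^2 := by
    rw [hDdef, Complex.ofReal_mul, mul_pow, ← Complex.ofReal_pow, Real.sq_sqrt hvpos.le, hv]
    push_cast
    ring
  have hne1 : (2 + 2/(n:ℂ)) * (d:ℂ)^2 ≠ (d:ℂ)^2 := by
    intro h
    have h2 : (2 + 2/(n:ℂ)) = 1 := by
      have := mul_right_cancel₀ hsne (h.trans (one_mul ((d:ℂ)^2)).symm)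
      exact this
    have h4 : (2 + 2/(n:ℝ)) = 1 := by
      have h3 : (((2 + 2/(n:ℝ)) : ℝ) : ℂ) = ((1 : ℝ) : ℂ) := by
        push_cast
        rw [← h2]
      exact Complex.ofReal_inj.mp h3
    linarith
  refine ⟨hDpos, ?_⟩
  intro x y hxy
  obtain ⟨P, hxP, hyP, hPP⟩ := exists_simplex hn' hdpos hDpos hD2 x y hxy
  obtain ⟨y', hxy', hyy'⟩ := exists_third hn hdpos hDpos hD2 x y hxy
  obtain ⟨Q, hxQ, hy'Q, hQQ⟩ := exists_simplex hn' hdpos hDpos hD2 x y' hxy'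
  have hTex : ∀ u w : EuclideanSpace ℝ (Fin n), ∃ S : Finset (EuclideanSpace ℝ (Fin n)),
      dist u w = d → (u ∈ S ∧ w ∈ S ∧ ∀ f : EuclideanSpace ℝ (Fin n) → (Fin n → ℂ),
        UnitPreservingOn n (↑S) f → phi n (f u) (f w) = (d:ℂ)^2) := by
    intro u w
    by_cases h : dist u w = d
    · obtain ⟨S, h1, h2, h3⟩ := hmem u w h
      exact ⟨S, fun _ => ⟨h1, h2, h3⟩⟩
    · exact ⟨∅, fun hc => absurd hc h⟩
  choose T hT using hTex
  set i0 : Fin n := ⟨0, hn'⟩ with hi0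
  set S : Finset (EuclideanSpace ℝ (Fin n)) :=
    (Finset.univ.biUnion fun i : Fin n =>
       T x (P i) ∪ T y (P i) ∪ T x (Q i) ∪ T y' (Q i) ∪
       (Finset.univ.biUnion fun j : Fin n => T (P i) (P j) ∪ T (Q i) (Q j)))
    ∪ T y y' with hS
  have hsub1 : ∀ i, T x (P i) ⊆ S := by
    intro i z hz
    apply Finset.mem_union_left
    refine Finset.mem_biUnion.mpr ⟨i, Finset.mem_univ _, ?_⟩
    simp only [Finset.mem_union]; tauto
  have hsub2 : ∀ i, T y (P i) ⊆ S := by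
    intro i z hz
    apply Finset.mem_union_left
    refine Finset.mem_biUnion.mpr ⟨i, Finset.mem_univ _, ?_⟩
    simp only [Finset.mem_union]; tauto
  have hsub3 : ∀ i, T x (Q i) ⊆ S := by
    intro i z hz
    apply Finset.mem_union_left
    refine Finset.mem_biUnion.mpr ⟨i, Finset.mem_univ _, ?_⟩
    simp only [Finset.mem_union]; tauto
  have hsub4 : ∀ i, T y' (Q i) ⊆ S := by
    intro i z hz
    apply Finset.mem_union_left
    refine Finset.mem_biUnion.mpr ⟨i, Finset.mem_univ _, ?_⟩
    simp only [Finset.mem_union]; tauto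
  have hsub5 : ∀ i j, T (P i) (P j) ⊆ S := by
    intro i j z hz
    apply Finset.mem_union_left
    refine Finset.mem_biUnion.mpr ⟨i, Finset.mem_univ _, ?_⟩
    simp only [Finset.mem_union]
    exact Or.inr (Finset.mem_biUnion.mpr ⟨j, Finset.mem_univ _, by
      simp only [Finset.mem_union]; tauto⟩)
  have hsub6 : ∀ i j, T (Q i) (Q j) ⊆ S := by
    intro i j z hz
    apply Finset.mem_union_left
    refine Finset.mem_biUnion.mpr ⟨i, Finset.mem_univ _, ?_⟩
    simp only [Finset.mem_union]
    exact Or.inr (Finset.mem_biUnion.mpr ⟨j, Finset.mem_univ _, by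
      simp only [Finset.mem_union]; tauto⟩)
  have hsub7 : T y y' ⊆ S := Finset.subset_union_right
  refine ⟨S, hsub1 i0 ((hT x (P i0) (hxP i0)).1), hsub2 i0 ((hT y (P i0) (hyP i0)).1), ?_⟩
  intro f hf
  have pair : ∀ u w : EuclideanSpace ℝ (Fin n), dist u w = d → T u w ⊆ S →
      phi n (f u) (f w) = (d:ℂ)^2 := by
    intro u w h hsub
    refine (hT u w h).2.2 f ?_
    intro a ha b hb hab
    exact hf a (hsub ha) b (hsub hb) hab
  have hfxP : ∀ i, phi n (f x) (f (P i)) = (d:ℂ)^2 := fun i => pair _ _ (hxP i) (hsub1 i)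
  have hfyP : ∀ i, phi n (f y) (f (P i)) = (d:ℂ)^2 := fun i => pair _ _ (hyP i) (hsub2 i)
  have hfPP : ∀ i j, i ≠ j → phi n (f (P i)) (f (P j)) = (d:ℂ)^2 :=
    fun i j hij => pair _ _ (hPP i j hij) (hsub5 i j)
  have hfxQ : ∀ i, phi n (f x) (f (Q i)) = (d:ℂ)^2 := fun i => pair _ _ (hxQ i) (hsub3 i)
  have hfy'Q : ∀ i, phi n (f y') (f (Q i)) = (d:ℂ)^2 := fun i => pair _ _ (hy'Q i) (hsub4 i)
  have hfQQ : ∀ i j, i ≠ j → phi n (f (Q i)) (f (Q j)) = (d:ℂ)^2 :=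
    fun i j hij => pair _ _ (hQQ i j hij) (hsub6 i j)
  have hfyy' : phi n (f y) (f y') = (d:ℂ)^2 := pair _ _ hyy' hsub7
  have hkey1 := key hn' ((d:ℂ)^2) hsne (f x) (f y) (fun i => f (P i)) hfxP hfyP hfPP
  have hkey2 := key hn' ((d:ℂ)^2) hsne (f x) (f y') (fun i => f (Q i)) hfxQ hfy'Q hfQQ
  rcases hkey1 with h1 | h1
  · rw [h1, hcastv]
  · exfalso
    rcases hkey2 with h2 | h2
    · rw [← h1] at hfyy'
      rw [h2] at hfyy'
      exact hne1 hfyy'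
    · have h0 : phi n (f y) (f y') = 0 := by
        rw [← h1, ← h2, phi_self]
      rw [h0] at hfyy'
      exact hsne hfyy'.symm
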